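/- Let F be a field with characteristic not equal to 2, and let x be an element of F with x ≠ 1 and x ≠ -1. Set a = (x+1)²/(2(x-1)), b = (x-1)/2, c = (1-x)/(1+x), d = 4x/(1-x²). Then a·b·c·d = x and a + b + c + d = x. -/

import Mathlib

theorem stmt12 (F : Type*) [Field F] (h2 : ringChar F ≠ 2) (x : F)
    (hx1 : x ≠ 1) (hx2 : x ≠ -1) :
    let a := (x + 1)^2 / (2 * (x - 1))
    let b := (x - 1) / 2
    let c := (1 - x) / (1 + x)
    let d := 4 * x / (1 - x^2)
    a * b * c * d = x ∧ a + b + c + d = x := by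
  have h2' : (2 : F) ≠ 0 := Ring.two_ne_zero h2
  have hm : x - 1 ≠ 0 := sub_ne_zero.mpr hx1
  have hp : 1 + x ≠ 0 := fun h => hx2 (by linear_combination h)
  have hq : 1 - x ^ 2 ≠ 0 := fun h =>
    mul_ne_zero (neg_ne_zero.mpr hm) hp (by linear_combination h)
  have hK : (-4 + (x ^ 2 * 8 - x ^ 4 * 4) : F) ≠ 0 := fun h =>
    mul_ne_zero (mul_ne_zero h2' h2') (pow_ne_zero 2 hq) (by linear_combination -h)
  intro a b c d
  constructor <;> (show _ = x) <;> simp only [a, b, c, d] <;> field_simp <;> ring
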